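/- Let q^2 be a primitive N-th root of unity with q^N = (-1)^{N+1}. For any nonzero complex numbers x1, x2, x3, h with h^N = x1 x2 x3, there exists an irreducible N-dimensional representation rho of the triangle algebra with rho(X_i^N) = x_i Id for i = 1,2,3 and rho(q^{-1}X1X2X3) = h Id. -/

import Mathlib

private def gpm {n : Type*} [Fintype n] [DecidableEq n] (σ : n → n) (α : n → ℂ) :
    Matrix n n ℂ := Matrix.of fun j i => if j = σ i then α i else 0

private lemma gpm_mul {n : Type*} [Fintype n] [DecidableEq n] (σ τ : n → n) (α β : n → ℂ) :
    gpm σ α * gpm τ β = gpm (fun i => σ (τ i)) (fun i => α (τ i) * β i) := by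
  ext j i
  rw [Matrix.mul_apply]
  rw [Finset.sum_eq_single (τ i)]
  · simp [gpm, ite_mul]
  · intro k _ hk; simp [gpm, hk]
  · simp

private lemma gpm_congr {n : Type*} [Fintype n] [DecidableEq n] {σ τ : n → n} {α β : n → ℂ}
    (hσ : ∀ i, σ i = τ i) (hα : ∀ i, α i = β i) : gpm σ α = gpm τ β := by
  ext j i
  simp only [gpm, Matrix.of_apply, hσ i, hα i]

private lemma gpm_smul {n : Type*} [Fintype n] [DecidableEq n] (z : ℂ) (σ : n → n) (α : n → ℂ) :
    z • gpm σ α = gpm σ (fun i => z * α i) := by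
  ext j i
  simp only [gpm, Matrix.smul_apply, Matrix.of_apply, smul_eq_mul, mul_ite, mul_zero]

private lemma gpm_id_smul_one {n : Type*} [Fintype n] [DecidableEq n] (z : ℂ) :
    gpm (fun i : n => i) (fun _ => z) = z • (1 : Matrix n n ℂ) := by
  ext j i
  simp only [gpm, Matrix.of_apply, Matrix.smul_apply, Matrix.one_apply, smul_eq_mul,
    mul_ite, mul_one, mul_zero]

private lemma pow_mod_helper {ζ : ℂ} {N : ℕ} (hz : ζ ^ N = 1) (a : ℕ) :
    ζ ^ (a % N) = ζ ^ a := by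
  conv_rhs => rw [← Nat.mod_add_div a N]
  rw [pow_add, pow_mul, hz, one_pow, mul_one]

open scoped Fin.NatCast Fin.IntCast Fin.CommRing

theorem triangle_representation_exists {N : ℕ} (hN : 0 < N) (q : ℂ)
    (hq : IsPrimitiveRoot (q ^ 2) N) (hqN : q ^ N = (-1 : ℂ) ^ (N + 1))
    (x1 x2 x3 h : ℂ) (hx1 : x1 ≠ 0) (hx2 : x2 ≠ 0) (hx3 : x3 ≠ 0) (hh : h ≠ 0)
    (hprod : h ^ N = x1 * x2 * x3) :
    ∃ X1 X2 X3 : Matrix (Fin N) (Fin N) ℂ,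
      IsUnit X1 ∧ IsUnit X2 ∧ IsUnit X3 ∧
      X1 * X2 = (q ^ 2) • (X2 * X1) ∧
      X2 * X3 = (q ^ 2) • (X3 * X2) ∧
      X3 * X1 = (q ^ 2) • (X1 * X3) ∧
      (∀ W : Submodule ℂ (Fin N → ℂ),
        (∀ v ∈ W, X1.mulVec v ∈ W) → (∀ v ∈ W, X2.mulVec v ∈ W) →
        (∀ v ∈ W, X3.mulVec v ∈ W) → W = ⊥ ∨ W = ⊤) ∧
      X1 ^ N = x1 • (1 : Matrix (Fin N) (Fin N) ℂ) ∧
      X2 ^ N = x2 • (1 : Matrix (Fin N) (Fin N) ℂ) ∧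
      X3 ^ N = x3 • (1 : Matrix (Fin N) (Fin N) ℂ) ∧
      q⁻¹ • (X1 * X2 * X3) = h • (1 : Matrix (Fin N) (Fin N) ℂ) := by
  haveI : NeZero N := ⟨hN.ne'⟩
  have hq0 : q ≠ 0 := by
    intro h0
    rw [h0, zero_pow hN.ne'] at hqN
    exact pow_ne_zero _ (by norm_num : (-1 : ℂ) ≠ 0) hqN.symm
  have hq20 : (q ^ 2 : ℂ) ≠ 0 := pow_ne_zero _ hq0
  have hqN1 : (q ^ 2) ^ N = 1 := hq.pow_eq_one
  obtain ⟨y1, hy1⟩ := IsAlgClosed.exists_pow_nat_eq x1 hN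
  obtain ⟨y2, hy2⟩ := IsAlgClosed.exists_pow_nat_eq x2 hN
  have hy10 : y1 ≠ 0 := fun h0 => hx1 (by rw [← hy1, h0, zero_pow hN.ne'])
  have hy20 : y2 ≠ 0 := fun h0 => hx2 (by rw [← hy2, h0, zero_pow hN.ne'])
  set y3 : ℂ := h * (y1 * y2)⁻¹ with hy3def
  have hy123 : y1 * y2 * y3 = h := by
    rw [hy3def]; field_simp
  have hy3 : y3 ^ N = x3 := by
    have h12 : (y1 * y2) ^ N = x1 * x2 := by rw [mul_pow, hy1, hy2]
    rw [hy3def, mul_pow, inv_pow, h12, hprod]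
    field_simp
  -- the diagonal entries and the coefficients of the lowering operator
  set d : Fin N → ℂ := fun i => y1 * (q ^ 2) ^ (i : ℕ) with hd_def
  set c : Fin N → ℂ := fun i => q * ((q ^ 2) ^ (i : ℕ))⁻¹ with hc_def
  have hpm : ∀ a : ℕ, (q ^ 2) ^ (a % N) = (q ^ 2) ^ a := fun a => pow_mod_helper hqN1 a
  have hval : ∀ a b : Fin N, (q ^ 2) ^ ((a + b : Fin N) : ℕ) = (q ^ 2) ^ (a : ℕ) * (q ^ 2) ^ (b : ℕ) := by
    intro a b
    rw [Fin.val_add, hpm, pow_add]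
  have hone : (q ^ 2) ^ ((1 : Fin N) : ℕ) = q ^ 2 := by
    rw [Fin.val_one', hpm, pow_one]
  have hd_succ : ∀ j : Fin N, d (j + 1) = q ^ 2 * d j := by
    intro j
    simp only [hd_def]
    rw [hval, hone]; ring
  have hc_succ : ∀ j : Fin N, c j = q ^ 2 * c (j + 1) := by
    intro j
    simp only [hc_def]
    rw [hval, hone]
    have hpj : ((q ^ 2) ^ (j : ℕ) : ℂ) ≠ 0 := pow_ne_zero _ hq20
    field_simp
  have hdc : ∀ i : Fin N, d i * c i = y1 * q := by
    intro i
    simp only [hd_def, hc_def]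
    have hpj : ((q ^ 2) ^ (i : ℕ) : ℂ) ≠ 0 := pow_ne_zero _ hq20
    field_simp
  set X1 : Matrix (Fin N) (Fin N) ℂ := gpm (fun i => i) d with hX1def
  set X2 : Matrix (Fin N) (Fin N) ℂ := gpm (fun i => i + 1) (fun _ => y2) with hX2def
  set X3 : Matrix (Fin N) (Fin N) ℂ := gpm (fun i => i - 1) (fun i => y3 * c i) with hX3def
  -- the three commutation relations
  have rel12 : X1 * X2 = (q ^ 2) • (X2 * X1) := by
    rw [hX1def, hX2def, gpm_mul, gpm_mul, gpm_smul]
    exact gpm_congr (fun i => rfl) (fun i => by rw [hd_succ]; ring)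
  have rel23 : X2 * X3 = (q ^ 2) • (X3 * X2) := by
    rw [hX2def, hX3def, gpm_mul, gpm_mul, gpm_smul]
    exact gpm_congr (fun i => by ring) (fun i => by rw [hc_succ i]; ring)
  have rel31 : X3 * X1 = (q ^ 2) • (X1 * X3) := by
    rw [hX1def, hX3def, gpm_mul, gpm_mul, gpm_smul]
    refine gpm_congr (fun i => rfl) (fun i => ?_)
    have := hd_succ (i - 1)
    rw [show i - 1 + 1 = i by ring] at this
    rw [this]; ring
  -- the central element
  have hX123 : q⁻¹ • (X1 * X2 * X3) = h • (1 : Matrix (Fin N) (Fin N) ℂ) := by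
    rw [hX1def, hX2def, hX3def, gpm_mul, gpm_mul, gpm_smul, ← gpm_id_smul_one]
    refine gpm_congr (fun i => by ring) (fun i => ?_)
    have h1 : i - 1 + 1 = i := by ring
    rw [h1, show d i * y2 * (y3 * c i) = d i * c i * (y2 * y3) from by ring, hdc i, ← hy123]
    field_simp
  -- powers
  have hX1pow : X1 ^ N = x1 • (1 : Matrix (Fin N) (Fin N) ℂ) := by
    have key : ∀ m : ℕ, X1 ^ m = gpm (fun i : Fin N => i) (fun i => d i ^ m) := by
      intro m
      induction m with
      | zero =>
        rw [pow_zero, ← one_smul ℂ (1 : Matrix (Fin N) (Fin N) ℂ), ← gpm_id_smul_one]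
        exact gpm_congr (fun i => rfl) (fun i => (pow_zero _).symm)
      | succ m ih =>
        rw [pow_succ, ih, hX1def, gpm_mul]
        exact gpm_congr (fun i => rfl) (fun i => (pow_succ _ _).symm)
    rw [key N, ← gpm_id_smul_one]
    refine gpm_congr (fun i => rfl) (fun i => ?_)
    simp only [hd_def]
    rw [mul_pow, ← pow_mul, mul_comm (i : ℕ) N, pow_mul, hqN1, one_pow, mul_one, hy1]
  have hX2key : ∀ m : ℕ, X2 ^ m = gpm (fun i : Fin N => i + (m : Fin N)) (fun _ => y2 ^ m) := by
    intro m
    induction m with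
    | zero =>
      rw [pow_zero, ← one_smul ℂ (1 : Matrix (Fin N) (Fin N) ℂ), ← gpm_id_smul_one]
      exact gpm_congr (fun i => by push_cast; ring) (fun i => (pow_zero _).symm)
    | succ m ih =>
      rw [pow_succ, ih, hX2def, gpm_mul]
      exact gpm_congr (fun i => by push_cast; ring) (fun i => (pow_succ _ _).symm)
  have hX2pow : X2 ^ N = x2 • (1 : Matrix (Fin N) (Fin N) ℂ) := by
    rw [hX2key N, ← gpm_id_smul_one]
    exact gpm_congr (fun i => by rw [Fin.natCast_self, add_zero]) (fun i => hy2)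
  -- the product of all the c's equals 1
  have hCprod : ∀ i : Fin N, (∏ t ∈ Finset.range N, c (i - (t : Fin N))) = 1 := by
    intro i
    have e1 : (∏ t ∈ Finset.range N, c (i - (t : Fin N))) = ∏ k : Fin N, c (i - k) := by
      rw [← Fin.prod_univ_eq_prod_range (fun t => c (i - (t : Fin N))) N]
      exact Finset.prod_congr rfl fun k _ => by rw [Fin.cast_val_eq_self]
    have e2 : (∏ k : Fin N, c (i - k)) = ∏ k : Fin N, c k :=
      Equiv.prod_comp (Equiv.subLeft i) c
    have hsum : 2 * (∑ k : Fin N, (k : ℕ)) = N * (N - 1) := by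
      rw [mul_comm, Fin.sum_univ_eq_sum_range (fun k => k) N,
        Finset.sum_range_id_mul_two]
    have e3 : (∏ k : Fin N, c k) = q ^ N * (((-1 : ℂ)) ^ ((N + 1) * (N - 1)))⁻¹ := by
      simp only [hc_def]
      rw [Finset.prod_mul_distrib, Finset.prod_const, Finset.card_univ, Fintype.card_fin,
        Finset.prod_inv_distrib, Finset.prod_pow_eq_pow_sum, ← pow_mul, hsum,
        pow_mul, hqN, ← pow_mul]
    rw [e1, e2, e3, hqN]
    rcases Nat.even_or_odd N with he | ho
    · have h1 : Odd (N + 1) := Even.add_one he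
      have h2 : Odd ((N + 1) * (N - 1)) := h1.mul (Nat.Even.sub_odd hN he odd_one)
      rw [h1.neg_one_pow, h2.neg_one_pow]
      norm_num
    · have h1 : Even (N + 1) := Odd.add_one ho
      have h2 : Even ((N + 1) * (N - 1)) := h1.mul_right _
      rw [h1.neg_one_pow, h2.neg_one_pow]
      norm_num
  have hX3key : ∀ m : ℕ, X3 ^ m = gpm (fun i : Fin N => i - (m : Fin N))
      (fun i => y3 ^ m * ∏ t ∈ Finset.range m, c (i - (t : Fin N))) := by
    intro m
    induction m with
    | zero =>
      rw [pow_zero, ← one_smul ℂ (1 : Matrix (Fin N) (Fin N) ℂ), ← gpm_id_smul_one]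
      exact gpm_congr (fun i => by push_cast; ring)
        (fun i => by rw [pow_zero, Finset.prod_range_zero, mul_one])
    | succ m ih =>
      rw [pow_succ, ih, hX3def, gpm_mul]
      refine gpm_congr (fun i => by push_cast; ring) (fun i => ?_)
      rw [Finset.prod_range_succ']
      have hre : ∀ t : ℕ, i - ((t + 1 : ℕ) : Fin N) = (i - 1) - (t : Fin N) := by
        intro t; push_cast; ring
      simp only [hre, Nat.cast_zero, sub_zero]
      ring
  have hX3pow : X3 ^ N = x3 • (1 : Matrix (Fin N) (Fin N) ℂ) := by
    rw [hX3key N, ← gpm_id_smul_one]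
    refine gpm_congr (fun i => by rw [Fin.natCast_self, sub_zero]) (fun i => ?_)
    rw [hCprod i, mul_one, hy3]
  -- units
  have unit_of : ∀ (A : Matrix (Fin N) (Fin N) ℂ) (x : ℂ), x ≠ 0 →
      A ^ N = x • (1 : Matrix (Fin N) (Fin N) ℂ) → IsUnit A := by
    intro A x hx hA
    rw [Matrix.isUnit_iff_isUnit_det, isUnit_iff_ne_zero]
    intro h0
    have hdet : A.det ^ N = x ^ N * 1 := by
      rw [← Matrix.det_pow, hA, Matrix.det_smul, Matrix.det_one, Fintype.card_fin]
    rw [h0, zero_pow hN.ne', mul_one] at hdet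
    exact hx (pow_eq_zero_iff hN.ne' |>.mp hdet.symm)
  refine ⟨X1, X2, X3, unit_of X1 x1 hx1 hX1pow, unit_of X2 x2 hx2 hX2pow,
    unit_of X3 x3 hx3 hX3pow, rel12, rel23, rel31, ?_, hX1pow, hX2pow, hX3pow, hX123⟩
  -- irreducibility
  intro W hW1 hW2 _
  by_cases hbot : W = ⊥
  · exact Or.inl hbot
  right
  -- mulVec formulas
  have hmv1 : ∀ v : Fin N → ℂ, X1.mulVec v = fun j => d j * v j := by
    intro v; funext j
    rw [hX1def]
    simp [Matrix.mulVec, dotProduct, gpm, ite_mul, Finset.sum_ite_eq]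
  have hmv2 : ∀ k : Fin N, X2.mulVec (Pi.single k 1) = y2 • (Pi.single (k + 1) 1 : Fin N → ℂ) := by
    intro k; funext j
    rw [hX2def]
    simp [Matrix.mulVec_single, gpm, Pi.single_apply, mul_ite]
  -- d is injective
  have hdinj : ∀ a b : Fin N, a ≠ b → d a ≠ d b := by
    intro a b hab hd
    apply hab
    simp only [hd_def] at hd
    exact Fin.ext (hq.pow_inj a.isLt b.isLt (mul_left_cancel₀ hy10 hd))
  -- if W contains a nonzero vector, it contains a standard basis vector
  have reach : ∀ n : ℕ, ∀ v : Fin N → ℂ, v ∈ W → v ≠ 0 →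
      (Finset.univ.filter fun k => v k ≠ 0).card ≤ n → ∃ i, Pi.single i (1 : ℂ) ∈ W := by
    intro n
    induction n with
    | zero =>
      intro v hv hv0 hcard
      exfalso; apply hv0; funext k
      rw [Pi.zero_apply]
      by_contra hk
      have hmem : k ∈ Finset.univ.filter fun k => v k ≠ 0 := by simp [hk]
      have := Finset.card_eq_zero.mp (Nat.le_zero.mp hcard)
      rw [this] at hmem
      exact absurd hmem (Finset.notMem_empty k)
    | succ n ih =>
      intro v hv hv0 hcard
      obtain ⟨i, hi⟩ : ∃ i, v i ≠ 0 := by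
        by_contra hall; push_neg at hall
        exact hv0 (funext fun k => hall k)
      by_cases hsingle : ∀ k, k ≠ i → v k = 0
      · refine ⟨i, ?_⟩
        have hv_eq : Pi.single i (1 : ℂ) = (v i)⁻¹ • v := by
          funext k
          by_cases hk : k = i
          · subst hk
            simp [Pi.single_apply, inv_mul_cancel₀ hi]
          · simp [Pi.single_apply, hk, hsingle k hk]
        rw [hv_eq]
        exact W.smul_mem _ hv
      · push_neg at hsingle
        obtain ⟨j, hji, hj⟩ := hsingle
        set w : Fin N → ℂ := fun k => (d k - d j) * v k with hw
        have hwW : w ∈ W := by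
          have h2 := W.sub_mem (hW1 v hv) (W.smul_mem (d j) hv)
          have : w = X1.mulVec v - d j • v := by
            funext k
            rw [hmv1]
            simp [hw]
            ring
          rwa [this]
        have hwi : w i ≠ 0 :=
          mul_ne_zero (sub_ne_zero.mpr (hdinj i j (Ne.symm hji))) hi
        have hw0 : w ≠ 0 := fun h0 => hwi (by rw [h0]; rfl)
        have hsub : (Finset.univ.filter fun k => w k ≠ 0) ⊆
            (Finset.univ.filter fun k => v k ≠ 0).erase j := by
          intro k hk
          simp only [Finset.mem_filter, Finset.mem_univ, true_and, hw] at hk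
          rcases mul_ne_zero_iff.mp hk with ⟨hk1, hk2⟩
          refine Finset.mem_erase.mpr ⟨?_, by simp [hk2]⟩
          intro hkj; subst hkj
          exact hk1 (by ring)
        have hjmem : j ∈ Finset.univ.filter fun k => v k ≠ 0 := by simp [hj]
        have hcard' : (Finset.univ.filter fun k => w k ≠ 0).card ≤ n := by
          have := Finset.card_le_card hsub
          rw [Finset.card_erase_of_mem hjmem] at this
          omega
        exact ih w hwW hw0 hcard'
  obtain ⟨v, hvW, hv0⟩ := (Submodule.ne_bot_iff W).mp hbot
  obtain ⟨i, hiW⟩ := reach _ v hvW hv0 le_rfl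
  -- shift around to get all basis vectors
  have step : ∀ k : Fin N, Pi.single k (1 : ℂ) ∈ W → Pi.single (k + 1) (1 : ℂ) ∈ W := by
    intro k hk
    have h1 := hW2 _ hk
    rw [hmv2 k] at h1
    have h2 := W.smul_mem y2⁻¹ h1
    rwa [smul_smul, inv_mul_cancel₀ hy20, one_smul] at h2
  have shift : ∀ m : ℕ, Pi.single (i + (m : Fin N)) (1 : ℂ) ∈ W := by
    intro m
    induction m with
    | zero => simpa using hiW
    | succ m ih =>
      have := step _ ih
      have harg : i + (m : Fin N) + 1 = i + ((m + 1 : ℕ) : Fin N) := by push_cast; ring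
      rwa [harg] at this
  have hall : ∀ k : Fin N, Pi.single k (1 : ℂ) ∈ W := by
    intro k
    have := shift ((k - i : Fin N) : ℕ)
    rwa [Fin.cast_val_eq_self, add_sub_cancel] at this
  rw [eq_top_iff]
  intro u _
  have hu : u = ∑ k : Fin N, u k • (Pi.single k 1 : Fin N → ℂ) := by
    funext j
    rw [Finset.sum_apply]
    simp [Pi.single_apply, Finset.sum_ite_eq]
  rw [hu]
  exact Submodule.sum_mem W fun k _ => W.smul_mem _ (hall k)
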